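/- Let λ ∈ (0,1] and θ ∈ (0, π/2). The two-qubit Gisin state ρ_{λ,θ} = λ|ψ(θ)⟩⟨ψ(θ)| + (1−λ)(|00⟩⟨00| + |11⟩⟨11|)/2, where |ψ(θ)⟩ = sinθ|01⟩ − cosθ|10⟩, satisfies C_w(ρ_{λ,θ}) = λ and C_{l₁}(ρ_{λ,θ}) = C_R(ρ_{λ,θ}) = λ·sin(2θ), where coherence is measured in the product standard basis {|00⟩, |01⟩, |10⟩, |11⟩}. -/

import Mathlib

open Matrix BigOperators
open scoped ComplexOrder

noncomputable section

/-- A density matrix: positive semidefinite with unit trace. -/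
def IsDensity {n : Type*} [Fintype n] (ρ : Matrix n n ℂ) : Prop :=
  ρ.PosSemidef ∧ ρ.trace = 1

/-- A matrix is incoherent if it is diagonal in the fixed (standard) basis. -/
def IsIncoherent {n : Type*} (σ : Matrix n n ℂ) : Prop :=
  ∀ i j, i ≠ j → σ i j = 0

/-- The coherence weight of a state `ρ`. -/
noncomputable def cohWeight {n : Type*} [Fintype n] (ρ : Matrix n n ℂ) : ℝ :=
  sInf {s : ℝ | s ∈ Set.Icc (0 : ℝ) 1 ∧
    ∃ σ τ : Matrix n n ℂ,
      IsDensity σ ∧ IsIncoherent σ ∧ IsDensity τ ∧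
      ρ = (1 - s) • σ + s • τ}

/-- The robustness of coherence. -/
noncomputable def cohRobustness {n : Type*} [Fintype n] (ρ : Matrix n n ℂ) : ℝ :=
  sInf {s : ℝ | 0 ≤ s ∧ ∃ τ : Matrix n n ℂ, IsDensity τ ∧
    IsIncoherent ((1 + s)⁻¹ • (ρ + s • τ))}

/-- The `l₁` norm of coherence: sum of absolute values of off-diagonal entries. -/
noncomputable def Cl1 {n : Type*} [Fintype n] [DecidableEq n] (ρ : Matrix n n ℂ) : ℝ :=
  ∑ i : n, ∑ j : n, if i = j then 0 else ‖ρ i j‖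

/-- The vector `|ψ(θ)⟩ = sin θ |01⟩ - cos θ |10⟩` of a two-qubit system. -/
noncomputable def gisinVec (θ : ℝ) : Fin 2 × Fin 2 → ℂ := fun p =>
  if p = ((0 : Fin 2), (1 : Fin 2)) then (Real.sin θ : ℂ)
  else if p = ((1 : Fin 2), (0 : Fin 2)) then -(Real.cos θ : ℂ)
  else 0

/-- The Gisin state `ρ_{λ,θ} = λ |ψ(θ)⟩⟨ψ(θ)| + (1-λ)(|00⟩⟨00| + |11⟩⟨11|)/2`. -/
noncomputable def gisinState (lam θ : ℝ) :
    Matrix (Fin 2 × Fin 2) (Fin 2 × Fin 2) ℂ :=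
  lam • Matrix.vecMulVec (gisinVec θ) (star (gisinVec θ)) +
    (1 - lam) • Matrix.diagonal (fun p : Fin 2 × Fin 2 =>
      if p = ((0 : Fin 2), (0 : Fin 2)) then (1 / 2 : ℂ)
      else if p = ((1 : Fin 2), (1 : Fin 2)) then (1 / 2 : ℂ) else 0)

/-! ### Auxiliary lemmas -/

local notation "i00" => ((0 : Fin 2), (0 : Fin 2))
local notation "i01" => ((0 : Fin 2), (1 : Fin 2))
local notation "i10" => ((1 : Fin 2), (0 : Fin 2))
local notation "i11" => ((1 : Fin 2), (1 : Fin 2))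

lemma psd_quad {n : Type*} [Fintype n] [DecidableEq n] {M : Matrix n n ℂ} (hM : M.PosSemidef)
    (i j : n) (α β : ℂ) :
    0 ≤ ((starRingEnd ℂ) α * α * M i i + (starRingEnd ℂ) α * β * M i j
      + (starRingEnd ℂ) β * α * M j i + (starRingEnd ℂ) β * β * M j j).re := by
  have h := hM.re_dotProduct_nonneg (Pi.single i α + Pi.single j β)
  have e : star (Pi.single i α + Pi.single j β) ⬝ᵥ (M *ᵥ (Pi.single i α + Pi.single j β))
      = (starRingEnd ℂ) α * α * M i i + (starRingEnd ℂ) α * β * M i j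
      + (starRingEnd ℂ) β * α * M j i + (starRingEnd ℂ) β * β * M j j := by
    rw [star_add, mulVec_add, mulVec_single, mulVec_single]
    rw [← Pi.single_star, ← Pi.single_star]
    simp only [add_dotProduct, single_dotProduct, Pi.add_apply]
    simp only [Complex.star_def]
    simp only [Pi.smul_apply, Matrix.col_apply, op_smul_eq_mul]
    ring
  rw [e] at h
  simpa using h

lemma psd_diag_re {n : Type*} [Fintype n] [DecidableEq n] {M : Matrix n n ℂ} (hM : M.PosSemidef)
    (i : n) : 0 ≤ (M i i).re := by simpa using psd_quad hM i i 1 0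

lemma psd_diag_im {n : Type*} [Fintype n] {M : Matrix n n ℂ} (hM : M.PosSemidef)
    (i : n) : (M i i).im = 0 := by
  have h2 := congrArg Complex.im (hM.1.apply i i)
  simp [Complex.conj_im] at h2
  linarith

lemma psd_cs {n : Type*} [Fintype n] [DecidableEq n] {M : Matrix n n ℂ} (hM : M.PosSemidef)
    (i j : n) : ‖M i j‖ ^ 2 ≤ (M i i).re * (M j j).re := by
  have hji : M j i = (starRingEnd ℂ) (M i j) := by rw [← hM.1.apply j i]; rfl
  set c := M i j with hcdef
  set nn := ‖c‖ with hndef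
  have hc : (starRingEnd ℂ) c * c = ((nn : ℂ)) ^ 2 := by
    rw [mul_comm, Complex.mul_conj]
    norm_cast
    rw [Complex.normSq_eq_norm_sq]
  have hc2 : c * (starRingEnd ℂ) c = ((nn : ℂ)) ^ 2 := by rw [mul_comm]; exact hc
  have key : ∀ t : ℝ, 0 ≤ (nn ^ 2 * (M i i).re) * (t * t) + (-(2 * nn ^ 3)) * t
      + nn ^ 2 * (M j j).re := by
    intro t
    have h := psd_quad hM i j ((t : ℂ) * c) (-(nn : ℂ))
    rw [hji] at h
    have e : (starRingEnd ℂ) ((t:ℂ) * c) * ((t:ℂ) * c) * M i i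
        + (starRingEnd ℂ) ((t:ℂ) * c) * (-(nn:ℂ)) * c
        + (starRingEnd ℂ) (-(nn:ℂ)) * ((t:ℂ) * c) * ((starRingEnd ℂ) c)
        + (starRingEnd ℂ) (-(nn:ℂ)) * (-(nn:ℂ)) * M j j
        = ((nn:ℂ) ^ 2 * ((t:ℂ) * (t:ℂ))) * M i i + (-(2 * (nn:ℂ) ^ 3) * (t:ℂ))
          + (nn:ℂ) ^ 2 * M j j := by
      simp only [_root_.map_mul, map_neg, Complex.conj_ofReal]
      linear_combination ((t:ℂ)^2 * M i i - (t:ℂ) * (nn:ℂ)) * hc + (-(t:ℂ) * (nn:ℂ)) * hc2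
    rw [e] at h
    simp [Complex.mul_re, Complex.mul_im, ← Complex.ofReal_pow, psd_diag_im hM i,
      psd_diag_im hM j] at h
    ring_nf at h ⊢
    linarith
  have hd := discrim_le_zero key
  rw [discrim] at hd
  rcases eq_or_ne nn 0 with h0 | h0
  · rw [h0]
    simpa using mul_nonneg (psd_diag_re hM i) (psd_diag_re hM j)
  · have hn4 : 0 < nn ^ 4 := by positivity
    nlinarith [hd, hn4]

lemma outer_psd {n : Type*} [Fintype n] [DecidableEq n] (v : n → ℂ) :
    (vecMulVec v (star v)).PosSemidef := by
  rw [vecMulVec_eq Unit]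
  have h := posSemidef_self_mul_conjTranspose (replicateCol Unit v)
  rwa [conjTranspose_replicateCol] at h

lemma outer_density (v : Fin 2 × Fin 2 → ℂ) (hv : ∑ p, Complex.normSq (v p) = 1) :
    IsDensity (vecMulVec v (star v)) := by
  refine ⟨outer_psd v, ?_⟩
  have : (vecMulVec v (star v)).trace = ∑ p, (Complex.normSq (v p) : ℂ) := by
    simp [Matrix.trace, Matrix.diag, vecMulVec_apply, star_apply, Complex.mul_conj]
  rw [this]
  norm_cast

lemma gisinVec_normSq (θ : ℝ) : ∑ p, Complex.normSq (gisinVec θ p) = 1 := by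
  simp only [gisinVec, Fintype.sum_prod_type, Fin.sum_univ_two]
  norm_num [Prod.ext_iff, Complex.normSq_ofReal, Complex.normSq_neg, -Complex.ofReal_sin,
    -Complex.ofReal_cos]
  nlinarith [Real.sin_sq_add_cos_sq θ]

lemma diag_density : IsDensity (Matrix.diagonal (fun p : Fin 2 × Fin 2 =>
      if p = ((0 : Fin 2), (0 : Fin 2)) then (1 / 2 : ℂ)
      else if p = ((1 : Fin 2), (1 : Fin 2)) then (1 / 2 : ℂ) else 0)) := by
  constructor
  · refine Matrix.PosSemidef.diagonal fun p => ?_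
    split_ifs <;> norm_num [Complex.le_def]
  · simp [Matrix.trace_diagonal, Fintype.sum_prod_type, Fin.sum_univ_two, Prod.ext_iff]
    norm_num

section entries
variable (lam θ : ℝ)

lemma gE_d00 : gisinState lam θ i00 i00 = (((1 - lam) / 2 : ℝ) : ℂ) := by
  simp [gisinState, gisinVec, vecMulVec_apply, Matrix.diagonal_apply, Matrix.add_apply,
    Matrix.smul_apply, Complex.real_smul, star_apply, ← Complex.cos_conj, ← Complex.sin_conj,
    Complex.conj_ofReal, Prod.ext_iff]
  try (left; ring)
  try (push_cast; ring)

lemma gE_d01 : gisinState lam θ i01 i01 = ((lam * Real.sin θ ^ 2 : ℝ) : ℂ) := by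
  simp [gisinState, gisinVec, vecMulVec_apply, Matrix.diagonal_apply, Matrix.add_apply,
    Matrix.smul_apply, Complex.real_smul, star_apply, ← Complex.cos_conj, ← Complex.sin_conj,
    Complex.conj_ofReal, Prod.ext_iff]
  try (left; ring)
  try (push_cast; ring)

lemma gE_d10 : gisinState lam θ i10 i10 = ((lam * Real.cos θ ^ 2 : ℝ) : ℂ) := by
  simp [gisinState, gisinVec, vecMulVec_apply, Matrix.diagonal_apply, Matrix.add_apply,
    Matrix.smul_apply, Complex.real_smul, star_apply, ← Complex.cos_conj, ← Complex.sin_conj,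
    Complex.conj_ofReal, Prod.ext_iff]
  try (left; ring)
  try (push_cast; ring)

lemma gE_d11 : gisinState lam θ i11 i11 = (((1 - lam) / 2 : ℝ) : ℂ) := by
  simp [gisinState, gisinVec, vecMulVec_apply, Matrix.diagonal_apply, Matrix.add_apply,
    Matrix.smul_apply, Complex.real_smul, star_apply, ← Complex.cos_conj, ← Complex.sin_conj,
    Complex.conj_ofReal, Prod.ext_iff]
  try (left; ring)
  try (push_cast; ring)

lemma gE_o1 : gisinState lam θ i01 i10 = ((-(lam * Real.sin θ * Real.cos θ) : ℝ) : ℂ) := by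
  simp [gisinState, gisinVec, vecMulVec_apply, Matrix.diagonal_apply, Matrix.add_apply,
    Matrix.smul_apply, Complex.real_smul, star_apply, ← Complex.cos_conj, ← Complex.sin_conj,
    Complex.conj_ofReal, Prod.ext_iff]
  try (left; ring)
  try (push_cast; ring)

lemma gE_o2 : gisinState lam θ i10 i01 = ((-(lam * Real.sin θ * Real.cos θ) : ℝ) : ℂ) := by
  simp [gisinState, gisinVec, vecMulVec_apply, Matrix.diagonal_apply, Matrix.add_apply,
    Matrix.smul_apply, Complex.real_smul, star_apply, ← Complex.cos_conj, ← Complex.sin_conj,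
    Complex.conj_ofReal, Prod.ext_iff]
  try (left; ring)
  try (push_cast; ring)

lemma gE_zero (p q : Fin 2 × Fin 2) (hpq : p ≠ q)
    (h1 : ¬(p = i01 ∧ q = i10)) (h2 : ¬(p = i10 ∧ q = i01)) :
    gisinState lam θ p q = 0 := by
  fin_cases p <;> fin_cases q <;>
    simp_all [gisinState, gisinVec, vecMulVec_apply, Matrix.diagonal_apply, Matrix.add_apply,
      Matrix.smul_apply, Complex.real_smul, star_apply, Prod.ext_iff]

end entries

lemma density_diag_re_sum (τ : Matrix (Fin 2 × Fin 2) (Fin 2 × Fin 2) ℂ) (h : IsDensity τ) :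
    (τ i00 i00).re + (τ i01 i01).re + (τ i10 i10).re + (τ i11 i11).re = 1 := by
  have h2 := congrArg Complex.re h.2
  simp [Matrix.trace, Matrix.diag, Fintype.sum_prod_type, Fin.sum_univ_two,
    Complex.add_re] at h2
  linarith

lemma gisin_hyps (lam θ : ℝ) (hlam : lam ∈ Set.Ioc (0 : ℝ) 1)
    (hθ : θ ∈ Set.Ioo 0 (Real.pi / 2)) :
    0 < lam ∧ lam ≤ 1 ∧ 0 < Real.sin θ ∧ 0 < Real.cos θ := by
  obtain ⟨hl0, hl1⟩ := hlam
  obtain ⟨hθ0, hθ1⟩ := hθ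
  have hpi := Real.pi_pos
  exact ⟨hl0, hl1, Real.sin_pos_of_pos_of_lt_pi hθ0 (by linarith),
    Real.cos_pos_of_mem_Ioo ⟨by linarith, hθ1⟩⟩

set_option maxHeartbeats 1000000 in
lemma gisin_part_weight (lam θ : ℝ) (hlam : lam ∈ Set.Ioc (0 : ℝ) 1)
    (hθ : θ ∈ Set.Ioo 0 (Real.pi / 2)) :
    cohWeight (gisinState lam θ) = lam := by
  obtain ⟨hl0, hl1, hst, hct⟩ := gisin_hyps lam θ hlam hθ
  have hs0' := hlam.1
  have pyth := Real.sin_sq_add_cos_sq θ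
  have hmem : lam ∈ {s : ℝ | s ∈ Set.Icc (0 : ℝ) 1 ∧
      ∃ σ τ : Matrix (Fin 2 × Fin 2) (Fin 2 × Fin 2) ℂ,
        IsDensity σ ∧ IsIncoherent σ ∧ IsDensity τ ∧
        gisinState lam θ = (1 - s) • σ + s • τ} := by
    refine ⟨⟨le_of_lt hl0, hl1⟩, _, _, diag_density,
      fun i j hij => Matrix.diagonal_apply_ne _ hij,
      outer_density _ (gisinVec_normSq θ), ?_⟩
    unfold gisinState
    exact add_comm _ _
  have hlb : ∀ s ∈ {s : ℝ | s ∈ Set.Icc (0 : ℝ) 1 ∧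
      ∃ σ τ : Matrix (Fin 2 × Fin 2) (Fin 2 × Fin 2) ℂ,
        IsDensity σ ∧ IsIncoherent σ ∧ IsDensity τ ∧
        gisinState lam θ = (1 - s) • σ + s • τ}, lam ≤ s := by
    rintro s ⟨⟨hs0, hs1⟩, σ, τ, hσd, hσinc, hτd, hdecomp⟩
    have hτ01 : 0 ≤ (τ i01 i01).re := psd_diag_re hτd.1 _
    have hτ10 : 0 ≤ (τ i10 i10).re := psd_diag_re hτd.1 _
    have hτ00 : 0 ≤ (τ i00 i00).re := psd_diag_re hτd.1 _
    have hτ11 : 0 ≤ (τ i11 i11).re := psd_diag_re hτd.1 _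
    have hσ01 : 0 ≤ (σ i01 i01).re := psd_diag_re hσd.1 _
    have hσ10 : 0 ≤ (σ i10 i10).re := psd_diag_re hσd.1 _
    have E10 : ((-(lam * Real.sin θ * Real.cos θ) : ℝ) : ℂ) = (s:ℂ) * τ i01 i10 := by
      have h := congrFun (congrFun hdecomp i01) i10
      rw [gE_o1] at h
      simpa [Matrix.add_apply, Matrix.smul_apply, Complex.real_smul,
        hσinc i01 i10 (by decide)] using h
    have E01d : lam * Real.sin θ ^ 2 = (1-s) * (σ i01 i01).re + s * (τ i01 i01).re := by
      have h := congrFun (congrFun hdecomp i01) i01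
      rw [gE_d01] at h
      have h2 := congrArg Complex.re h
      simpa [Matrix.add_apply, Matrix.smul_apply, Complex.real_smul, Complex.add_re,
        Complex.re_ofReal_mul, -Complex.ofReal_sin, -Complex.ofReal_cos,
        -Complex.ofReal_mul, -Complex.ofReal_pow] using h2
    have E10d : lam * Real.cos θ ^ 2 = (1-s) * (σ i10 i10).re + s * (τ i10 i10).re := by
      have h := congrFun (congrFun hdecomp i10) i10
      rw [gE_d10] at h
      have h2 := congrArg Complex.re h
      simpa [Matrix.add_apply, Matrix.smul_apply, Complex.real_smul, Complex.add_re,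
        Complex.re_ofReal_mul, -Complex.ofReal_sin, -Complex.ofReal_cos,
        -Complex.ofReal_mul, -Complex.ofReal_pow] using h2
    have htr := density_diag_re_sum τ hτd
    have En : s * ‖τ i01 i10‖ = lam * Real.sin θ * Real.cos θ := by
      have h2 := congrArg norm E10
      rw [norm_mul, Complex.norm_real, Complex.norm_real] at h2
      rw [Real.norm_eq_abs, Real.norm_eq_abs] at h2
      rw [abs_of_nonneg hs0] at h2
      rw [abs_neg, abs_of_nonneg (by positivity)] at h2
      linarith
    have hcs := psd_cs hτd.1 i01 i10
    have hu : s * (τ i01 i01).re ≤ lam * Real.sin θ ^ 2 := by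
      nlinarith [mul_nonneg (sub_nonneg.2 hs1) hσ01]
    have hv : s * (τ i10 i10).re ≤ lam * Real.cos θ ^ 2 := by
      nlinarith [mul_nonneg (sub_nonneg.2 hs1) hσ10]
    have huv : (lam * Real.sin θ * Real.cos θ)^2
        ≤ (s * (τ i01 i01).re) * (s * (τ i10 i10).re) := by
      have h5 : s^2 * ‖τ i01 i10‖^2 ≤ s^2 * ((τ i01 i01).re * (τ i10 i10).re) :=
        mul_le_mul_of_nonneg_left hcs (sq_nonneg s)
      calc (lam * Real.sin θ * Real.cos θ)^2 = s^2 * ‖τ i01 i10‖^2 := by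
            rw [← En]; ring
        _ ≤ s^2 * ((τ i01 i01).re * (τ i10 i10).re) := h5
        _ = (s * (τ i01 i01).re) * (s * (τ i10 i10).re) := by ring
    have hlamct : 0 < lam * Real.cos θ ^ 2 := by positivity
    have hlamst : 0 < lam * Real.sin θ ^ 2 := by positivity
    have hu' : lam * Real.sin θ ^ 2 ≤ s * (τ i01 i01).re := by
      have h3 : (s * (τ i01 i01).re) * (s * (τ i10 i10).re)
          ≤ (s * (τ i01 i01).re) * (lam * Real.cos θ ^ 2) :=
        mul_le_mul_of_nonneg_left hv (mul_nonneg hs0 hτ01)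
      have h4 : (lam * Real.sin θ * Real.cos θ)^2
          ≤ (s * (τ i01 i01).re) * (lam * Real.cos θ ^ 2) := le_trans huv h3
      nlinarith [h4, hlamct]
    have hv' : lam * Real.cos θ ^ 2 ≤ s * (τ i10 i10).re := by
      have h3 : (s * (τ i01 i01).re) * (s * (τ i10 i10).re)
          ≤ (lam * Real.sin θ ^ 2) * (s * (τ i10 i10).re) :=
        mul_le_mul_of_nonneg_right hu (mul_nonneg hs0 hτ10)
      have h4 : (lam * Real.sin θ * Real.cos θ)^2
          ≤ (lam * Real.sin θ ^ 2) * (s * (τ i10 i10).re) := le_trans huv h3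
      nlinarith [h4, hlamst]
    nlinarith [htr, hu', hv', mul_nonneg hs0 hτ00, mul_nonneg hs0 hτ11, pyth, hs0]
  refine le_antisymm (csInf_le ⟨0, fun s hs => hs.1.1⟩ hmem) (le_csInf ⟨lam, hmem⟩ hlb)
set_option maxHeartbeats 1000000 in
lemma gisin_part_l1 (lam θ : ℝ) (hlam : lam ∈ Set.Ioc (0 : ℝ) 1)
    (hθ : θ ∈ Set.Ioo 0 (Real.pi / 2)) :
    Cl1 (gisinState lam θ) = lam * Real.sin (2 * θ) := by
  obtain ⟨hl0, hl1, hst, hct⟩ := gisin_hyps lam θ hlam hθ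
  have hs0' := hlam.1
  have pyth := Real.sin_sq_add_cos_sq θ
  rw [Real.sin_two_mul]
  simp only [Cl1, Fintype.sum_prod_type, Fin.sum_univ_two]
  norm_num [gisinState, gisinVec, vecMulVec_apply, Matrix.diagonal_apply, Matrix.add_apply,
    Matrix.smul_apply, Complex.real_smul, star_apply, ← Complex.cos_conj, ← Complex.sin_conj,
    Complex.conj_ofReal, Prod.ext_iff]
  rw [← Complex.ofReal_sin, ← Complex.ofReal_cos, Complex.norm_real, Complex.norm_real, Real.norm_eq_abs, Real.norm_eq_abs,
    abs_of_pos hl0, abs_of_pos hst, abs_of_pos hct]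
  ring
set_option maxHeartbeats 1000000 in
lemma gisin_part_rob (lam θ : ℝ) (hlam : lam ∈ Set.Ioc (0 : ℝ) 1)
    (hθ : θ ∈ Set.Ioo 0 (Real.pi / 2)) :
    cohRobustness (gisinState lam θ) = lam * Real.sin (2 * θ) := by
  obtain ⟨hl0, hl1, hst, hct⟩ := gisin_hyps lam θ hlam hθ
  have hs0' := hlam.1
  have pyth := Real.sin_sq_add_cos_sq θ
  have hφsum : ∑ p, Complex.normSq ((fun p : Fin 2 × Fin 2 =>
      if p = i01 then (((Real.sqrt 2)⁻¹ : ℝ) : ℂ)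
      else if p = i10 then (((Real.sqrt 2)⁻¹ : ℝ) : ℂ) else 0) p) = 1 := by
    simp only [Fintype.sum_prod_type, Fin.sum_univ_two]
    norm_num [Prod.ext_iff, Complex.normSq_ofReal]
  set φ : Fin 2 × Fin 2 → ℂ := fun p =>
      if p = i01 then (((Real.sqrt 2)⁻¹ : ℝ) : ℂ)
      else if p = i10 then (((Real.sqrt 2)⁻¹ : ℝ) : ℂ) else 0 with hφ
  have hr2 : ((Real.sqrt 2)⁻¹ : ℝ) * ((Real.sqrt 2)⁻¹ : ℝ) = 1/2 := by
    rw [← mul_inv, Real.mul_self_sqrt (by norm_num : (0:ℝ) ≤ 2)]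
    norm_num
  have hs'0 : 0 ≤ lam * Real.sin (2*θ) := by
    rw [Real.sin_two_mul]; positivity
  have hmem : (lam * Real.sin (2*θ)) ∈ {s : ℝ | 0 ≤ s ∧
      ∃ τ : Matrix (Fin 2 × Fin 2) (Fin 2 × Fin 2) ℂ, IsDensity τ ∧
      IsIncoherent ((1 + s)⁻¹ • (gisinState lam θ + s • τ))} := by
    refine ⟨hs'0, vecMulVec φ (star φ), outer_density φ hφsum, ?_⟩
    intro p q hpq
    have hφE : (vecMulVec φ (star φ)) p q = φ p * (starRingEnd ℂ) (φ q) := by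
      simp [vecMulVec_apply, star_apply, Complex.star_def]
    have hrr : ((((Real.sqrt 2)⁻¹ : ℝ)) : ℂ) * ((((Real.sqrt 2)⁻¹ : ℝ)) : ℂ) = 1/2 := by
      rw [← Complex.ofReal_mul, hr2]
      norm_num
    have hsin2 : Real.sin (2*θ) = 2 * Real.sin θ * Real.cos θ := Real.sin_two_mul θ
    have hentry : gisinState lam θ p q
        + (lam * Real.sin (2*θ)) • ((vecMulVec φ (star φ)) p q) = 0 := by
      by_cases h1 : p = i01 ∧ q = i10
      · obtain ⟨hp, hq⟩ := h1
        rw [hp, hq] at hφE ⊢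
        rw [hφE, gE_o1]
        have hφ1 : φ i01 = (((Real.sqrt 2)⁻¹ : ℝ) : ℂ) := by simp [hφ]
        have hφ2 : φ i10 = (((Real.sqrt 2)⁻¹ : ℝ) : ℂ) := by simp [hφ, Prod.ext_iff]
        rw [hφ1, hφ2, Complex.conj_ofReal, hrr, Complex.real_smul, hsin2]
        push_cast
        ring
      · by_cases h2 : p = i10 ∧ q = i01
        · obtain ⟨hp, hq⟩ := h2
          rw [hp, hq] at hφE ⊢
          rw [hφE, gE_o2]
          have hφ1 : φ i01 = (((Real.sqrt 2)⁻¹ : ℝ) : ℂ) := by simp [hφ]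
          have hφ2 : φ i10 = (((Real.sqrt 2)⁻¹ : ℝ) : ℂ) := by simp [hφ, Prod.ext_iff]
          rw [hφ1, hφ2, Complex.conj_ofReal, hrr, Complex.real_smul, hsin2]
          push_cast
          ring
        · have hφ0 : φ p * (starRingEnd ℂ) (φ q) = 0 := by
            by_cases hp1 : p = i01
            · by_cases hq1 : q = i10
              · exact absurd ⟨hp1, hq1⟩ h1
              · have hq2 : q ≠ i01 := fun h => hpq (by rw [hp1, h])
                simp [hφ, hq1, hq2]
            · by_cases hp2 : p = i10
              · by_cases hq1 : q = i01
                · exact absurd ⟨hp2, hq1⟩ h2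
                · have hq2 : q ≠ i10 := fun h => hpq (by rw [hp2, h])
                  simp [hφ, hq1, hq2]
              · simp [hφ, hp1, hp2]
          rw [hφE, hφ0, gE_zero lam θ p q hpq h1 h2]
          simp
    simp only [Matrix.smul_apply, Matrix.add_apply, hentry, smul_zero]
  have hlb : ∀ s ∈ {s : ℝ | 0 ≤ s ∧
      ∃ τ : Matrix (Fin 2 × Fin 2) (Fin 2 × Fin 2) ℂ, IsDensity τ ∧
      IsIncoherent ((1 + s)⁻¹ • (gisinState lam θ + s • τ))}, lam * Real.sin (2*θ) ≤ s := by
    rintro s ⟨hs0, τ, hτd, hinc⟩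
    have h := hinc i01 i10 (by decide)
    have h1s : (0:ℝ) < 1 + s := by linarith
    have hE : (s:ℂ) * τ i01 i10 = ((lam * Real.sin θ * Real.cos θ : ℝ) : ℂ) := by
      have h2 : ((1+s)⁻¹ : ℝ) • (gisinState lam θ i01 i10 + (s:ℝ) • τ i01 i10) = 0 := by
        simpa [Matrix.smul_apply, Matrix.add_apply] using h
      rw [smul_eq_zero] at h2
      rcases h2 with h2 | h2
      · exact absurd h2 (by positivity)
      · rw [gE_o1] at h2
        rw [Complex.real_smul] at h2
        push_cast at h2 ⊢
        linear_combination h2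
    have En : s * ‖τ i01 i10‖ = lam * Real.sin θ * Real.cos θ := by
      have h2 := congrArg norm hE
      rw [norm_mul, Complex.norm_real, Complex.norm_real] at h2
      rw [Real.norm_eq_abs, Real.norm_eq_abs] at h2
      rw [abs_of_nonneg hs0, abs_of_nonneg (by positivity)] at h2
      linarith
    have hcs := psd_cs hτd.1 i01 i10
    have htr := density_diag_re_sum τ hτd
    have hτ01 : 0 ≤ (τ i01 i01).re := psd_diag_re hτd.1 _
    have hτ10 : 0 ≤ (τ i10 i10).re := psd_diag_re hτd.1 _
    have hτ00 : 0 ≤ (τ i00 i00).re := psd_diag_re hτd.1 _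
    have hτ11 : 0 ≤ (τ i11 i11).re := psd_diag_re hτd.1 _
    have hn : ‖τ i01 i10‖ ≤ 1/2 := by
      nlinarith [hcs, norm_nonneg (τ i01 i10), sq_nonneg ((τ i01 i01).re - (τ i10 i10).re)]
    have : lam * Real.sin θ * Real.cos θ ≤ s / 2 := by
      rw [← En]
      nlinarith [norm_nonneg (τ i01 i10)]
    rw [Real.sin_two_mul]
    linarith
  refine le_antisymm (csInf_le ⟨0, fun s hs => hs.1⟩ hmem) (le_csInf ⟨_, hmem⟩ hlb)

theorem gisin_cohWeight_and_l1_and_robustness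
    (lam θ : ℝ) (hlam : lam ∈ Set.Ioc (0 : ℝ) 1) (hθ : θ ∈ Set.Ioo 0 (Real.pi / 2)) :
    cohWeight (gisinState lam θ) = lam ∧
    Cl1 (gisinState lam θ) = lam * Real.sin (2 * θ) ∧
    cohRobustness (gisinState lam θ) = lam * Real.sin (2 * θ) :=
  ⟨gisin_part_weight lam θ hlam hθ, gisin_part_l1 lam θ hlam hθ, gisin_part_rob lam θ hlam hθ⟩
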